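/- Let D be the differentiation matrix of the Lagrange basis at the (k+1) Legendre–Gauss–Lobatto nodes on [−1,1], W the diagonal matrix of LGL quadrature weights, and B = diag(−1, 0, ..., 0, 1). Then the summation-by-parts property holds: W D + Dᵀ W = B. -/
import Mathlib


open Polynomial

/-- Summation-by-parts property W D + Dᵀ W = B for the differentiation matrix of the
Lagrange basis at the (k+1) Legendre–Gauss–Lobatto nodes, where W is the diagonal
matrix of LGL weights and B = diag(−1, 0, …, 0, 1). -/
theorem lgl_sbp_property (k : ℕ) (hk : 1 ≤ k)
    (x : Fin (k + 1) → ℝ) (ω : Fin (k + 1) → ℝ)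
    (hmono : StrictMono x)
    (hx0 : x 0 = -1) (hxk : x (Fin.last k) = 1)
    (hωpos : ∀ i, 0 < ω i)
    (hquad : ∀ p : Polynomial ℝ, p.natDegree ≤ 2 * k - 1 →
      ∑ i, ω i * p.eval (x i) = ∫ t in (-1 : ℝ)..1, p.eval t)
    (D : Matrix (Fin (k + 1)) (Fin (k + 1)) ℝ)
    (hD : ∀ i j, D i j =
      (Polynomial.derivative (Lagrange.basis Finset.univ x j)).eval (x i)) :
    ∀ i j, ω i * D i j + D j i * ω j =
      if i = j ∧ i = 0 then -1 else if i = j ∧ i = Fin.last k then 1 else 0 := by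
  intro i j
  have hinj : Set.InjOn x (Finset.univ : Finset (Fin (k+1))) := hmono.injective.injOn
  set li := Lagrange.basis Finset.univ x i with hli
  set lj := Lagrange.basis Finset.univ x j with hlj
  set p := li * lj with hp
  -- evaluation of basis polynomials
  have hevli : ∀ m, li.eval (x m) = if i = m then 1 else 0 := by
    intro m
    by_cases h : i = m
    · subst h; simp [hli, Lagrange.eval_basis_self hinj (Finset.mem_univ i)]
    · simp [h, hli, Lagrange.eval_basis_of_ne h (Finset.mem_univ m)]
  have hevlj : ∀ m, lj.eval (x m) = if j = m then 1 else 0 := by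
    intro m
    by_cases h : j = m
    · subst h; simp [hlj, Lagrange.eval_basis_self hinj (Finset.mem_univ j)]
    · simp [h, hlj, Lagrange.eval_basis_of_ne h (Finset.mem_univ m)]
  -- degree bound
  have hdegli : li.natDegree ≤ k := by
    rw [hli, Lagrange.natDegree_basis hinj (Finset.mem_univ i)]
    simp
  have hdeglj : lj.natDegree ≤ k := by
    rw [hlj, Lagrange.natDegree_basis hinj (Finset.mem_univ j)]
    simp
  have hdegp : p.natDegree ≤ 2 * k :=
    le_trans (natDegree_mul_le) (by omega)
  have hdeg : (derivative p).natDegree ≤ 2 * k - 1 :=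
    le_trans (natDegree_derivative_le p) (by omega)
  have hq := hquad (derivative p) hdeg
  -- the quadrature sum equals the desired combination
  have hterm : ∀ m, ω m * (derivative p).eval (x m) =
      (if j = m then ω m * (derivative li).eval (x m) else 0) +
      (if i = m then ω m * (derivative lj).eval (x m) else 0) := by
    intro m
    rw [hp, derivative_mul, eval_add, eval_mul, eval_mul, hevli m, hevlj m]
    by_cases h1 : j = m <;> by_cases h2 : i = m <;> simp [h1, h2] <;> ring
  have hsum : ∑ m, ω m * (derivative p).eval (x m) =
      ω j * (derivative li).eval (x j) + ω i * (derivative lj).eval (x i) := by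
    rw [Finset.sum_congr rfl fun m _ => hterm m, Finset.sum_add_distrib,
      Finset.sum_ite_eq, Finset.sum_ite_eq]
    simp
  -- the integral is the boundary term
  have hint : (∫ t in (-1 : ℝ)..1, (derivative p).eval t) = p.eval 1 - p.eval (-1) := by
    exact intervalIntegral.integral_eq_sub_of_hasDerivAt (fun t _ => p.hasDerivAt t)
      ((Polynomial.continuous (derivative p)).intervalIntegrable _ _)
  have hne : (0 : Fin (k+1)) ≠ Fin.last k := by
    intro h
    have := congrArg Fin.val h
    simp [Fin.last] at this
    omega
  have hk0 : k ≠ 0 := by omega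
  have hpm1 : p.eval (-1) = (if i = 0 then 1 else 0) * (if j = 0 then 1 else 0) := by
    have h1 := hevli 0; have h2 := hevlj 0
    rw [hx0] at h1 h2
    rw [hp, eval_mul, h1, h2]
  have hp1 : p.eval 1 = (if i = Fin.last k then 1 else 0) * (if j = Fin.last k then 1 else 0) := by
    have h1 := hevli (Fin.last k); have h2 := hevlj (Fin.last k)
    rw [hxk] at h1 h2
    rw [hp, eval_mul, h1, h2]
  have key : ω j * (derivative li).eval (x j) + ω i * (derivative lj).eval (x i)
      = p.eval 1 - p.eval (-1) := by rw [← hsum, ← hint, hq]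
  rw [hD i j, hD j i, ← hlj, ← hli]
  rw [show ω i * (derivative lj).eval (x i) + (derivative li).eval (x j) * ω j
      = ω j * (derivative li).eval (x j) + ω i * (derivative lj).eval (x i) by ring,
    key, hp1, hpm1]
  clear key hint hpm1 hp1 hsum hterm hq hdeg hdegp hdegli hdeglj hevli hevlj hquad hD hp hli hlj
  by_cases h1 : i = j
  · subst h1
    by_cases h2 : i = 0
    · subst h2
      simp [hne.symm, hne, hk0]
    · by_cases h3 : i = Fin.last k <;> simp [h2, h3, hk0]
  · have hR1 : ¬(i = j ∧ i = 0) := fun h => h1 h.1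
    have hR2 : ¬(i = j ∧ i = Fin.last k) := fun h => h1 h.1
    rw [if_neg hR1, if_neg hR2]
    by_cases h4 : i = Fin.last k
    · have h5 : j ≠ Fin.last k := fun h => h1 (h4.trans h.symm)
      have hi0 : i ≠ 0 := fun h => hne (h ▸ h4)
      simp [h4, h5, hi0, hk0]
    · by_cases h2 : i = 0
      · have h3 : j ≠ 0 := fun h => h1 (h2.trans h.symm)
        simp [h2, h3, h4, hk0]
      · simp [h2, h4]
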